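/- Let M = (S, A, P, r, γ) be a finite MDP with γ ∈ (0,1), p0 an initial state distribution, and μ a behavior policy. Suppose π* is an optimal policy of M (i.e., R_M^{π*} ≥ R_M^π for all policies π) that is covered by μ, i.e., d^μ(s) > 0 whenever d^{π*}(s) > 0 and μ(a|s) > 0 whenever d^{π*}(s) > 0 and π*(a|s) > 0. Then π* is also optimal in the augmented MDP M_μ, and the optimal values coincide: for every policy π, R_{M_μ}^π ≤ R_{M_μ}^{π*} = R_M^{π*}. -/
import Mathlib


open scoped BigOperators
open Finset

noncomputable section

/-- One-step state-distribution update under policy `π` (here `π s a` denotes `π(a|s)`). -/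
def nextDist {S A : Type} [Fintype S] [Fintype A]
    (P : S → A → S → ℝ) (π : S → A → ℝ) (d : S → ℝ) : S → ℝ :=
  fun s' => ∑ s, ∑ a, d s * π s a * P s a s'

/-- The time-`t` state distribution `d_t^π`. -/
def stateDist {S A : Type} [Fintype S] [Fintype A]
    (P : S → A → S → ℝ) (π : S → A → ℝ) (p0 : S → ℝ) : ℕ → S → ℝ
  | 0 => p0
  | t + 1 => nextDist P π (stateDist P π p0 t)

/-- The discounted state distribution `d^π`. -/
def discDist {S A : Type} [Fintype S] [Fintype A]
    (γ : ℝ) (P : S → A → S → ℝ) (π : S → A → ℝ) (p0 : S → ℝ) : S → ℝ :=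
  fun s => (1 - γ) * ∑' t : ℕ, γ ^ t * stateDist P π p0 t s

/-- The normalized expected return `R^π_M`. -/
def expReturn {S A : Type} [Fintype S] [Fintype A]
    (γ : ℝ) (P : S → A → S → ℝ) (r : S → A → ℝ) (π : S → A → ℝ) (p0 : S → ℝ) : ℝ :=
  (1 - γ) * ∑' t : ℕ, γ ^ t * ∑ s, ∑ a, stateDist P π p0 t s * π s a * r s a

/-- Transition kernel of the augmented MDP `M_μ` on `Option S`, where `none` plays the
role of the absorbing state `s_abs` and `dμ` is the discounted state distribution of
the behavior policy `μ`.  States `some s` with `dμ s = 0` are given no incoming mass,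
so the reachable state space is exactly `S_μ ∪ {s_abs}`. -/
def augP {S A : Type} [Fintype S] [Fintype A]
    (P : S → A → S → ℝ) (dμ : S → ℝ) (μ : S → A → ℝ) : Option S → A → Option S → ℝ
  | none, _, none => 1
  | none, _, some _ => 0
  | some s, a, some s' => if 0 < dμ s * μ s a ∧ 0 < dμ s' then P s a s' else 0
  | some s, a, none =>
      if 0 < dμ s * μ s a then ∑ s' ∈ Finset.univ.filter (fun s' => ¬ 0 < dμ s'), P s a s'
      else 1

/-- Reward function of the augmented MDP `M_μ`. -/
def augR {S A : Type} (r : S → A → ℝ) (dμ : S → ℝ) (μ : S → A → ℝ) : Option S → A → ℝ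
  | none, _ => 0
  | some s, a => if 0 < dμ s * μ s a then r s a else 0

/-- Initial state distribution of the augmented MDP `M_μ`. -/
def augp0 {S : Type} (p0 : S → ℝ) : Option S → ℝ
  | none => 0
  | some s => p0 s

set_option linter.unusedSectionVars false
namespace AugAux

variable {S A : Type} [Fintype S] [Fintype A]

/-- Per-step expected reward. -/
def stepReward (P : S → A → S → ℝ) (r : S → A → ℝ) (π : S → A → ℝ) (p0 : S → ℝ) (t : ℕ) : ℝ :=
  ∑ s, ∑ a, stateDist P π p0 t s * π s a * r s a

lemma expReturn_eq (γ : ℝ) (P : S → A → S → ℝ) (r : S → A → ℝ) (π : S → A → ℝ) (p0 : S → ℝ) :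
    expReturn γ P r π p0 = (1 - γ) * ∑' t : ℕ, γ ^ t * stepReward P r π p0 t := rfl

lemma stateDist_nonneg (P : S → A → S → ℝ) (hP0 : ∀ s a s', 0 ≤ P s a s')
    (π : S → A → ℝ) (hπ0 : ∀ s a, 0 ≤ π s a)
    (p0 : S → ℝ) (hp00 : ∀ s, 0 ≤ p0 s) : ∀ t s, 0 ≤ stateDist P π p0 t s := by
  intro t
  induction t with
  | zero => exact hp00
  | succ t ih =>
    intro s'
    exact Finset.sum_nonneg fun s _ => Finset.sum_nonneg fun a _ =>
      mul_nonneg (mul_nonneg (ih s) (hπ0 s a)) (hP0 s a s')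

lemma stateDist_mass (P : S → A → S → ℝ) (hP1 : ∀ s a, ∑ s', P s a s' = 1)
    (π : S → A → ℝ) (hπ1 : ∀ s, ∑ a, π s a = 1)
    (p0 : S → ℝ) (hp01 : ∑ s, p0 s = 1) : ∀ t, ∑ s, stateDist P π p0 t s = 1 := by
  intro t
  induction t with
  | zero => exact hp01
  | succ t ih =>
    show ∑ s', ∑ s, ∑ a, stateDist P π p0 t s * π s a * P s a s' = 1
    rw [Finset.sum_comm]
    calc ∑ s, ∑ s', ∑ a, stateDist P π p0 t s * π s a * P s a s'
        = ∑ s, ∑ a, ∑ s', stateDist P π p0 t s * π s a * P s a s' := by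
          refine Finset.sum_congr rfl fun s _ => ?_
          rw [Finset.sum_comm]
      _ = ∑ s, ∑ a, stateDist P π p0 t s * π s a := by
          refine Finset.sum_congr rfl fun s _ => Finset.sum_congr rfl fun a _ => ?_
          rw [← Finset.mul_sum, hP1 s a, mul_one]
      _ = ∑ s, stateDist P π p0 t s := by
          refine Finset.sum_congr rfl fun s _ => ?_
          rw [← Finset.mul_sum, hπ1 s, mul_one]
      _ = 1 := ih

lemma stateDist_le_one (P : S → A → S → ℝ) (hP0 : ∀ s a s', 0 ≤ P s a s')
    (hP1 : ∀ s a, ∑ s', P s a s' = 1)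
    (π : S → A → ℝ) (hπ0 : ∀ s a, 0 ≤ π s a) (hπ1 : ∀ s, ∑ a, π s a = 1)
    (p0 : S → ℝ) (hp00 : ∀ s, 0 ≤ p0 s) (hp01 : ∑ s, p0 s = 1)
    (t : ℕ) (s : S) : stateDist P π p0 t s ≤ 1 := by
  have := stateDist_mass P hP1 π hπ1 p0 hp01 t
  calc stateDist P π p0 t s
      ≤ ∑ s', stateDist P π p0 t s' :=
        Finset.single_le_sum (fun s' _ => stateDist_nonneg P hP0 π hπ0 p0 hp00 t s')
          (Finset.mem_univ s)
    _ = 1 := this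

lemma stepReward_nonneg (P : S → A → S → ℝ) (hP0 : ∀ s a s', 0 ≤ P s a s')
    (r : S → A → ℝ) (hr0 : ∀ s a, 0 ≤ r s a)
    (π : S → A → ℝ) (hπ0 : ∀ s a, 0 ≤ π s a)
    (p0 : S → ℝ) (hp00 : ∀ s, 0 ≤ p0 s) (t : ℕ) : 0 ≤ stepReward P r π p0 t :=
  Finset.sum_nonneg fun s _ => Finset.sum_nonneg fun a _ =>
    mul_nonneg (mul_nonneg (stateDist_nonneg P hP0 π hπ0 p0 hp00 t s) (hπ0 s a)) (hr0 s a)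

lemma stepReward_le_one (P : S → A → S → ℝ) (hP0 : ∀ s a s', 0 ≤ P s a s')
    (hP1 : ∀ s a, ∑ s', P s a s' = 1)
    (r : S → A → ℝ) (hr1 : ∀ s a, r s a ≤ 1)
    (π : S → A → ℝ) (hπ0 : ∀ s a, 0 ≤ π s a) (hπ1 : ∀ s, ∑ a, π s a = 1)
    (p0 : S → ℝ) (hp00 : ∀ s, 0 ≤ p0 s) (hp01 : ∑ s, p0 s = 1)
    (t : ℕ) : stepReward P r π p0 t ≤ 1 := by
  have hd := stateDist_nonneg P hP0 π hπ0 p0 hp00 t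
  calc stepReward P r π p0 t
      ≤ ∑ s, ∑ a, stateDist P π p0 t s * π s a := by
        refine Finset.sum_le_sum fun s _ => Finset.sum_le_sum fun a _ => ?_
        calc stateDist P π p0 t s * π s a * r s a
            ≤ stateDist P π p0 t s * π s a * 1 := by
              exact mul_le_mul_of_nonneg_left (hr1 s a) (mul_nonneg (hd s) (hπ0 s a))
          _ = stateDist P π p0 t s * π s a := mul_one _
    _ = ∑ s, stateDist P π p0 t s := by
        refine Finset.sum_congr rfl fun s _ => ?_
        rw [← Finset.mul_sum, hπ1 s, mul_one]
    _ = 1 := stateDist_mass P hP1 π hπ1 p0 hp01 t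

lemma summable_aux {γ : ℝ} (hγ0 : 0 < γ) (hγ1 : γ < 1) (f : ℕ → ℝ)
    (h0 : ∀ t, 0 ≤ f t) (h1 : ∀ t, f t ≤ 1) : Summable fun t : ℕ => γ ^ t * f t := by
  refine Summable.of_nonneg_of_le (fun t => mul_nonneg (by positivity) (h0 t))
    (fun t => ?_) (summable_geometric_of_lt_one hγ0.le hγ1)
  calc γ ^ t * f t ≤ γ ^ t * 1 := mul_le_mul_of_nonneg_left (h1 t) (by positivity)
    _ = γ ^ t := mul_one _

lemma discDist_pos {γ : ℝ} (hγ0 : 0 < γ) (hγ1 : γ < 1)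
    (P : S → A → S → ℝ) (hP0 : ∀ s a s', 0 ≤ P s a s') (hP1 : ∀ s a, ∑ s', P s a s' = 1)
    (π : S → A → ℝ) (hπ0 : ∀ s a, 0 ≤ π s a) (hπ1 : ∀ s, ∑ a, π s a = 1)
    (p0 : S → ℝ) (hp00 : ∀ s, 0 ≤ p0 s) (hp01 : ∑ s, p0 s = 1)
    {t : ℕ} {s : S} (h : 0 < stateDist P π p0 t s) : 0 < discDist γ P π p0 s := by
  have hsum : Summable fun n : ℕ => γ ^ n * stateDist P π p0 n s :=
    summable_aux hγ0 hγ1 _ (fun n => stateDist_nonneg P hP0 π hπ0 p0 hp00 n s)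
      (fun n => stateDist_le_one P hP0 hP1 π hπ0 hπ1 p0 hp00 hp01 n s)
  have hle : γ ^ t * stateDist P π p0 t s ≤ ∑' n : ℕ, γ ^ n * stateDist P π p0 n s :=
    Summable.le_tsum hsum t fun n _ =>
      mul_nonneg (by positivity) (stateDist_nonneg P hP0 π hπ0 p0 hp00 n s)
  have : 0 < γ ^ t * stateDist P π p0 t s := by positivity
  exact mul_pos (by linarith) (lt_of_lt_of_le this hle)

lemma discDist_nonneg {γ : ℝ} (hγ1 : γ < 1)
    (P : S → A → S → ℝ) (hP0 : ∀ s a s', 0 ≤ P s a s')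
    (π : S → A → ℝ) (hπ0 : ∀ s a, 0 ≤ π s a)
    (p0 : S → ℝ) (hp00 : ∀ s, 0 ≤ p0 s) (hγ0 : 0 ≤ γ) (s : S) :
    0 ≤ discDist γ P π p0 s :=
  mul_nonneg (by linarith) (tsum_nonneg fun n =>
    mul_nonneg (by positivity) (stateDist_nonneg P hP0 π hπ0 p0 hp00 n s))

lemma augP_nonneg (P : S → A → S → ℝ) (hP0 : ∀ s a s', 0 ≤ P s a s')
    (dμ : S → ℝ) (μ : S → A → ℝ) :
    ∀ x a x', 0 ≤ augP P dμ μ x a x' := by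
  rintro (_|s) a (_|s') <;> simp only [augP]
  · exact zero_le_one
  · exact le_refl 0
  · split
    · exact Finset.sum_nonneg fun s' _ => hP0 s a s'
    · exact zero_le_one
  · split
    · exact hP0 s a s'
    · exact le_refl 0

lemma augP_sum (P : S → A → S → ℝ) (hP1 : ∀ s a, ∑ s', P s a s' = 1)
    (dμ : S → ℝ) (μ : S → A → ℝ) :
    ∀ x a, ∑ x', augP P dμ μ x a x' = 1 := by
  rintro (_|s) a
  · rw [Fintype.sum_option]
    simp [augP]
  · rw [Fintype.sum_option]
    by_cases h : 0 < dμ s * μ s a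
    · simp only [augP, if_pos h]
      have : ∀ s', (if 0 < dμ s * μ s a ∧ 0 < dμ s' then P s a s' else 0)
          = if 0 < dμ s' then P s a s' else 0 := by
        intro s'
        by_cases h' : 0 < dμ s'
        · rw [if_pos ⟨h, h'⟩, if_pos h']
        · rw [if_neg (fun hc => h' hc.2), if_neg h']
      rw [Finset.sum_congr rfl fun s' _ => this s', Finset.sum_ite, Finset.sum_const_zero,
        add_zero]
      rw [add_comm, Finset.sum_filter_add_sum_filter_not Finset.univ (fun s' => 0 < dμ s') (P s a)]
      exact hP1 s a
    · simp only [augP, if_neg h]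
      have : ∀ s', (if 0 < dμ s * μ s a ∧ 0 < dμ s' then P s a s' else 0) = 0 := by
        intro s'; rw [if_neg (fun hc => h hc.1)]
      rw [Finset.sum_congr rfl fun s' _ => this s', Finset.sum_const_zero, add_zero]

lemma augp0_nonneg (p0 : S → ℝ) (hp00 : ∀ s, 0 ≤ p0 s) : ∀ x, 0 ≤ augp0 p0 x := by
  rintro (_|s) <;> simp [augp0, hp00]

lemma augp0_sum (p0 : S → ℝ) (hp01 : ∑ s, p0 s = 1) : ∑ x, augp0 p0 x = 1 := by
  rw [Fintype.sum_option]; simp [augp0, hp01]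

lemma augR_nonneg (r : S → A → ℝ) (hr0 : ∀ s a, 0 ≤ r s a) (dμ : S → ℝ) (μ : S → A → ℝ) :
    ∀ x a, 0 ≤ augR r dμ μ x a := by
  rintro (_|s) a <;> simp only [augR]
  · exact le_refl 0
  · split
    · exact hr0 s a
    · exact le_refl 0

lemma augR_le_one (r : S → A → ℝ) (hr1 : ∀ s a, r s a ≤ 1) (dμ : S → ℝ) (μ : S → A → ℝ) :
    ∀ x a, augR r dμ μ x a ≤ 1 := by
  rintro (_|s) a <;> simp only [augR]
  · exact zero_le_one
  · split
    · exact hr1 s a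
    · exact zero_le_one

end AugAux
set_option linter.unusedSectionVars false
namespace AugAux2
open AugAux

variable {S A : Type} [Fintype S] [Fintype A]

lemma coupling_le (P : S → A → S → ℝ) (hP0 : ∀ s a s', 0 ≤ P s a s')
    (dμ : S → ℝ) (μ : S → A → ℝ)
    (πa : Option S → A → ℝ) (hπa0 : ∀ x a, 0 ≤ πa x a)
    (p0 : S → ℝ) (hp00 : ∀ s, 0 ≤ p0 s) :
    ∀ t s, stateDist (augP P dμ μ) πa (augp0 p0) t (some s)
      ≤ stateDist P (fun s a => πa (some s) a) p0 t s := by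
  intro t
  induction t with
  | zero => intro s; exact le_refl _
  | succ t ih =>
    intro s'
    have hda := stateDist_nonneg (augP P dμ μ) (augP_nonneg P hP0 dμ μ) πa hπa0
      (augp0 p0) (augp0_nonneg p0 hp00) t
    simp only [stateDist, nextDist]
    rw [Fintype.sum_option]
    have h1 : ∑ a, stateDist (augP P dμ μ) πa (augp0 p0) t none * πa none a *
        augP P dμ μ none a (some s') = 0 := by simp [augP]
    rw [h1, zero_add]
    refine Finset.sum_le_sum fun s _ => Finset.sum_le_sum fun a _ => ?_
    have hle : augP P dμ μ (some s) a (some s') ≤ P s a s' := by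
      simp only [augP]; split
      · exact le_refl _
      · exact hP0 s a s'
    have haug0 : 0 ≤ augP P dμ μ (some s) a (some s') := augP_nonneg P hP0 dμ μ _ _ _
    have hd' : 0 ≤ stateDist P (fun s a => πa (some s) a) p0 t s :=
      le_trans (hda (some s)) (ih s)
    exact mul_le_mul (mul_le_mul (ih s) le_rfl (hπa0 _ a) hd')
      hle haug0 (mul_nonneg hd' (hπa0 _ a))

lemma coupling_eq (P : S → A → S → ℝ) (hP0 : ∀ s a s', 0 ≤ P s a s')
    (dμ : S → ℝ) (μ : S → A → ℝ)
    (πs : S → A → ℝ) (hπs0 : ∀ s a, 0 ≤ πs s a)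
    (p0 : S → ℝ) (hp00 : ∀ s, 0 ≤ p0 s)
    (πsa : Option S → A → ℝ) (hagree : ∀ s a, πsa (some s) a = πs s a)
    (hkeyS : ∀ t s, 0 < stateDist P πs p0 t s → 0 < dμ s)
    (hkeyA : ∀ t s a, 0 < stateDist P πs p0 t s → 0 < πs s a → 0 < μ s a) :
    ∀ t s, stateDist (augP P dμ μ) πsa (augp0 p0) t (some s) = stateDist P πs p0 t s := by
  intro t
  induction t with
  | zero => intro s; rfl
  | succ t ih =>
    intro s'
    have hd0 := stateDist_nonneg P hP0 πs hπs0 p0 hp00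
    simp only [stateDist, nextDist]
    rw [Fintype.sum_option]
    have h1 : ∑ a, stateDist (augP P dμ μ) πsa (augp0 p0) t none * πsa none a *
        augP P dμ μ none a (some s') = 0 := by simp [augP]
    rw [h1, zero_add]
    by_cases h' : 0 < dμ s'
    · refine Finset.sum_congr rfl fun s _ => Finset.sum_congr rfl fun a _ => ?_
      rw [ih s, hagree s a]
      rcases eq_or_lt_of_le (hd0 t s) with hz | hpos
      · rw [← hz]; ring
      rcases eq_or_lt_of_le (hπs0 s a) with hz | hposa
      · rw [← hz]; ring
      have hcond : 0 < dμ s * μ s a := mul_pos (hkeyS t s hpos) (hkeyA t s a hpos hposa)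
      have : augP P dμ μ (some s) a (some s') = P s a s' := by
        simp only [augP]; exact if_pos ⟨hcond, h'⟩
      rw [this]
    · have hzero : stateDist P πs p0 (t + 1) s' = 0 := by
        by_contra hne
        exact h' (hkeyS (t + 1) s' (lt_of_le_of_ne (hd0 (t + 1) s') (Ne.symm hne)))
      have hzero' : ∑ s, ∑ a, stateDist P πs p0 t s * πs s a * P s a s' = 0 := by
        simpa [stateDist, nextDist] using hzero
      rw [hzero']
      refine Finset.sum_eq_zero fun s _ => Finset.sum_eq_zero fun a _ => ?_
      have : augP P dμ μ (some s) a (some s') = 0 := by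
        simp only [augP]; exact if_neg fun hc => h' hc.2
      rw [this, mul_zero]

lemma stepReward_eq (P : S → A → S → ℝ) (hP0 : ∀ s a s', 0 ≤ P s a s')
    (r : S → A → ℝ) (dμ : S → ℝ) (μ : S → A → ℝ)
    (πs : S → A → ℝ) (hπs0 : ∀ s a, 0 ≤ πs s a)
    (p0 : S → ℝ) (hp00 : ∀ s, 0 ≤ p0 s)
    (πsa : Option S → A → ℝ) (hagree : ∀ s a, πsa (some s) a = πs s a)
    (hkeyS : ∀ t s, 0 < stateDist P πs p0 t s → 0 < dμ s)
    (hkeyA : ∀ t s a, 0 < stateDist P πs p0 t s → 0 < πs s a → 0 < μ s a) (t : ℕ) :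
    stepReward (augP P dμ μ) (augR r dμ μ) πsa (augp0 p0) t = stepReward P r πs p0 t := by
  have hd0 := stateDist_nonneg P hP0 πs hπs0 p0 hp00
  unfold stepReward
  rw [Fintype.sum_option]
  have h1 : ∑ a, stateDist (augP P dμ μ) πsa (augp0 p0) t none * πsa none a *
      augR r dμ μ none a = 0 := by simp [augR]
  rw [h1, zero_add]
  refine Finset.sum_congr rfl fun s _ => Finset.sum_congr rfl fun a _ => ?_
  rw [coupling_eq P hP0 dμ μ πs hπs0 p0 hp00 πsa hagree hkeyS hkeyA t s, hagree s a]
  rcases eq_or_lt_of_le (hd0 t s) with hz | hpos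
  · rw [← hz]; ring
  rcases eq_or_lt_of_le (hπs0 s a) with hz | hposa
  · rw [← hz]; ring
  have hcond : 0 < dμ s * μ s a := mul_pos (hkeyS t s hpos) (hkeyA t s a hpos hposa)
  have : augR r dμ μ (some s) a = r s a := by
    simp only [augR]; exact if_pos hcond
  rw [this]

end AugAux2

open AugAux AugAux2

/-- If `π*` is an optimal policy of `M` that is covered by the behavior
policy `μ`, then (any extension `πsa` of) `π*` is also optimal in the augmented MDP `M_μ`,
and the optimal values coincide: for every policy `πa` of `M_μ`,
`R_{M_μ}^{πa} ≤ R_{M_μ}^{π*} = R_M^{π*}`. -/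
theorem augmented_optimal_policy {S A : Type} [Fintype S] [Fintype A]
    (γ : ℝ) (hγ0 : 0 < γ) (hγ1 : γ < 1)
    (P : S → A → S → ℝ) (hP0 : ∀ s a s', 0 ≤ P s a s') (hP1 : ∀ s a, ∑ s', P s a s' = 1)
    (r : S → A → ℝ) (hr0 : ∀ s a, 0 ≤ r s a) (hr1 : ∀ s a, r s a ≤ 1)
    (p0 : S → ℝ) (hp00 : ∀ s, 0 ≤ p0 s) (hp01 : ∑ s, p0 s = 1)
    (μ : S → A → ℝ) (hμ0 : ∀ s a, 0 ≤ μ s a) (hμ1 : ∀ s, ∑ a, μ s a = 1)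
    (πs : S → A → ℝ) (hπs0 : ∀ s a, 0 ≤ πs s a) (hπs1 : ∀ s, ∑ a, πs s a = 1)
    (hopt : ∀ π' : S → A → ℝ, (∀ s a, 0 ≤ π' s a) → (∀ s, ∑ a, π' s a = 1) →
      expReturn γ P r π' p0 ≤ expReturn γ P r πs p0)
    (hcovS : ∀ s, 0 < discDist γ P πs p0 s → 0 < discDist γ P μ p0 s)
    (hcovA : ∀ s a, 0 < discDist γ P πs p0 s → 0 < πs s a → 0 < μ s a)
    (πsa : Option S → A → ℝ) (hπsa0 : ∀ s a, 0 ≤ πsa s a) (hπsa1 : ∀ s, ∑ a, πsa s a = 1)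
    (hagree : ∀ s a, πsa (some s) a = πs s a) :
    (∀ πa : Option S → A → ℝ, (∀ s a, 0 ≤ πa s a) → (∀ s, ∑ a, πa s a = 1) →
        expReturn γ (augP P (discDist γ P μ p0) μ) (augR r (discDist γ P μ p0) μ) πa (augp0 p0)
          ≤ expReturn γ (augP P (discDist γ P μ p0) μ) (augR r (discDist γ P μ p0) μ) πsa
              (augp0 p0)) ∧
      expReturn γ (augP P (discDist γ P μ p0) μ) (augR r (discDist γ P μ p0) μ) πsa (augp0 p0)
        = expReturn γ P r πs p0 := by
  classical
  have hdisc : ∀ t s, 0 < stateDist P πs p0 t s → 0 < discDist γ P πs p0 s :=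
    fun t s h => discDist_pos hγ0 hγ1 P hP0 hP1 πs hπs0 hπs1 p0 hp00 hp01 h
  have hkeyS : ∀ t s, 0 < stateDist P πs p0 t s → 0 < discDist γ P μ p0 s :=
    fun t s h => hcovS s (hdisc t s h)
  have hkeyA : ∀ t s a, 0 < stateDist P πs p0 t s → 0 < πs s a → 0 < μ s a :=
    fun t s a h h2 => hcovA s a (hdisc t s h) h2
  have heq : expReturn γ (augP P (discDist γ P μ p0) μ) (augR r (discDist γ P μ p0) μ) πsa
      (augp0 p0) = expReturn γ P r πs p0 := by
    rw [expReturn_eq, expReturn_eq]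
    congr 1
    refine tsum_congr fun t => ?_
    rw [stepReward_eq P hP0 r (discDist γ P μ p0) μ πs hπs0 p0 hp00 πsa hagree hkeyS hkeyA t]
  refine ⟨?_, heq⟩
  intro πa hπa0 hπa1
  rw [heq]
  have hπ'0 : ∀ s a, 0 ≤ (fun s a => πa (some s) a) s a := fun s a => hπa0 _ a
  have hπ'1 : ∀ s, ∑ a, (fun s a => πa (some s) a) s a = 1 := fun s => hπa1 (some s)
  have hle1 : expReturn γ (augP P (discDist γ P μ p0) μ) (augR r (discDist γ P μ p0) μ) πa
      (augp0 p0) ≤ expReturn γ P r (fun s a => πa (some s) a) p0 := by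
    rw [expReturn_eq, expReturn_eq]
    have hcle := coupling_le P hP0 (discDist γ P μ p0) μ πa hπa0 p0 hp00
    refine mul_le_mul_of_nonneg_left (Summable.tsum_le_tsum (fun t => ?_) ?_ ?_) (by linarith)
    · refine mul_le_mul_of_nonneg_left ?_ (by positivity)
      unfold stepReward
      rw [Fintype.sum_option]
      have h1 : ∑ a, stateDist (augP P (discDist γ P μ p0) μ) πa (augp0 p0) t none *
          πa none a * augR r (discDist γ P μ p0) μ none a = 0 := by simp [augR]
      rw [h1, zero_add]
      refine Finset.sum_le_sum fun s _ => Finset.sum_le_sum fun a _ => ?_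
      have hd' : 0 ≤ stateDist P (fun s a => πa (some s) a) p0 t s :=
        stateDist_nonneg P hP0 _ hπ'0 p0 hp00 t s
      have hR0 : 0 ≤ augR r (discDist γ P μ p0) μ (some s) a :=
        augR_nonneg r hr0 (discDist γ P μ p0) μ _ a
      have hRle : augR r (discDist γ P μ p0) μ (some s) a ≤ r s a := by
        simp only [augR]; split
        · exact le_refl _
        · exact hr0 s a
      exact mul_le_mul (mul_le_mul (hcle t s) le_rfl (hπa0 _ a) hd') hRle hR0
        (mul_nonneg hd' (hπa0 _ a))
    · exact summable_aux hγ0 hγ1 _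
        (fun t => stepReward_nonneg _ (augP_nonneg P hP0 _ μ) _
          (augR_nonneg r hr0 _ μ) πa hπa0 _ (augp0_nonneg p0 hp00) t)
        (fun t => stepReward_le_one _ (augP_nonneg P hP0 _ μ) (augP_sum P hP1 _ μ) _
          (augR_le_one r hr1 _ μ) πa hπa0 hπa1 _ (augp0_nonneg p0 hp00)
          (augp0_sum p0 hp01) t)
    · exact summable_aux hγ0 hγ1 _
        (fun t => stepReward_nonneg P hP0 r hr0 _ hπ'0 p0 hp00 t)
        (fun t => stepReward_le_one P hP0 hP1 r hr1 _ hπ'0 hπ'1 p0 hp00 hp01 t)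
  exact le_trans hle1 (hopt (fun s a => πa (some s) a) hπ'0 hπ'1)
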